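/- Suppose M is an ℝ[X]-submodule of Den[a,b] (with X acting as the indefinite Denjoy integral) which contains C[a,b], and suppose p ∈ ℝ[X] is a polynomial not divisible by X (i.e. p has nonzero constant term). Then multiplication by p is an automorphism of the ℝ[X]-module M; in particular the map f ↦ p·f is a bijection of M onto M. (In particular, taking M = C[a,b]: for p = c₀ + c₁X + ... + c_kX^k with c₀ ≠ 0, the operator f ↦ c₀f + c₁∫_a^x f + c₂∫_a^x∫_a^t f + ... is a bijection of C[a,b].) -/

import Mathlib

open MeasureTheory Set Filter

noncomputable section

attribute [local instance] Classical.propDecidable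

/-- The oscillation `ω(F, J)` of `F` on the set `J`. -/
def osc (F : ℝ → ℝ) (J : Set ℝ) : ℝ :=
  sSup {d : ℝ | ∃ x ∈ J, ∃ y ∈ J, d = |F x - F y|}

/-- `D` is a `K`-edged pre-partition of `[a,b]`: a finite nonempty collection of
pairwise non-overlapping closed subintervals of `[a,b]` whose endpoints lie in `K`. -/
def IsPrePartition (a b : ℝ) (K : Set ℝ) (D : Finset (ℝ × ℝ)) : Prop :=
  D.Nonempty ∧
  (∀ p ∈ D, p.1 ≤ p.2 ∧ p.1 ∈ K ∧ p.2 ∈ K ∧ Icc p.1 p.2 ⊆ Icc a b) ∧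
  (D : Set (ℝ × ℝ)).Pairwise fun p q => p.2 ≤ q.1 ∨ q.2 ≤ p.1

/-- `F ∈ AC_*(K)`: absolute continuity in the restricted sense on `K`. -/
def ACStar (a b : ℝ) (F : ℝ → ℝ) (K : Set ℝ) : Prop :=
  ∀ ε > (0:ℝ), ∃ δ > (0:ℝ), ∀ D : Finset (ℝ × ℝ), IsPrePartition a b K D →
    (∑ p ∈ D, (p.2 - p.1)) < δ → (∑ p ∈ D, osc F (Icc p.1 p.2)) < ε

/-- `F ∈ ACG_*(K)`: `K` is a countable union of closed sets `Kₙ ⊆ [a,b]` with `F ∈ AC_*(Kₙ)`. -/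
def ACGStar (a b : ℝ) (F : ℝ → ℝ) (K : Set ℝ) : Prop :=
  ∃ C : ℕ → Set ℝ, (∀ n, IsClosed (C n) ∧ C n ⊆ Icc a b ∧ ACStar a b F (C n)) ∧
    K = ⋃ n, C n

/-- `F` is the indefinite Denjoy integral of `f` on `[a,b]`:
`F` is continuous on `[a,b]`, `F(a) = 0`, `F ∈ ACG_*([a,b])`, and `F' = f` a.e. on `[a,b]`. -/
def HasDenjoyIntegralFn (a b : ℝ) (f F : ℝ → ℝ) : Prop :=
  ContinuousOn F (Icc a b) ∧ F a = 0 ∧ ACGStar a b F (Icc a b) ∧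
    ∀ᵐ x ∂(volume.restrict (Icc a b)), HasDerivAt F (f x) x

/-- `f ∈ Den[a,b]`: `f` is Denjoy integrable on `[a,b]`. -/
def DenjoyIntegrable (a b : ℝ) (f : ℝ → ℝ) : Prop :=
  ∃ F : ℝ → ℝ, HasDenjoyIntegralFn a b f F

/-- The Denjoy integral `∫_a^b f` (junk value `0` if `f` is not Denjoy integrable). -/
def denjoyIntegral (a b : ℝ) (f : ℝ → ℝ) : ℝ :=
  if h : DenjoyIntegrable a b f then Classical.choose h b else 0

/-- `M[a,b]`: measurable functions on `[a,b]` modulo a.e. equivalence. -/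
abbrev MSpace (a b : ℝ) := ℝ →ₘ[volume.restrict (Icc a b)] ℝ

/-- The action of the indeterminate `X`: the indefinite Denjoy integral
`(X·g)(x) = ∫_a^x g` (junk value `0` if `g` is not Denjoy integrable). -/
def Xop (a b : ℝ) (g : MSpace a b) : MSpace a b :=
  if h : ∃ F : C(ℝ, ℝ), HasDenjoyIntegralFn a b (fun x => g x) ⇑F then
    AEEqFun.mk ⇑(Classical.choose h) (Classical.choose h).continuous.aestronglyMeasurable
  else 0

namespace DenAux

variable {a b : ℝ}

lemma osc_nonneg (F : ℝ → ℝ) (J : Set ℝ) : 0 ≤ osc F J := by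
  apply Real.sSup_nonneg
  rintro d ⟨x, _, y, _, rfl⟩
  exact abs_nonneg _

lemma osc_le {F : ℝ → ℝ} {J : Set ℝ} {C : ℝ}
    (h : ∀ x ∈ J, ∀ y ∈ J, |F x - F y| ≤ C) (hC : 0 ≤ C) : osc F J ≤ C := by
  apply Real.sSup_le _ hC
  rintro d ⟨x, hx, y, hy, rfl⟩
  exact h x hx y hy

lemma bddAbove_oscSet {F : ℝ → ℝ} {J : Set ℝ} {C : ℝ} (h : ∀ x ∈ J, |F x| ≤ C) :
    BddAbove {d : ℝ | ∃ x ∈ J, ∃ y ∈ J, d = |F x - F y|} := by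
  refine ⟨2 * C, ?_⟩
  rintro d ⟨x, hx, y, hy, rfl⟩
  calc |F x - F y| ≤ |F x| + |F y| := abs_sub _ _
    _ ≤ C + C := add_le_add (h x hx) (h y hy)
    _ = 2 * C := by ring

lemma le_osc {F : ℝ → ℝ} {J : Set ℝ} {C : ℝ} (h : ∀ x ∈ J, |F x| ≤ C)
    {x y : ℝ} (hx : x ∈ J) (hy : y ∈ J) : |F x - F y| ≤ osc F J :=
  le_csSup (bddAbove_oscSet h) ⟨x, hx, y, hy, rfl⟩

lemma osc_congr {F G : ℝ → ℝ} {J : Set ℝ} (h : Set.EqOn F G J) : osc F J = osc G J := by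
  unfold osc
  congr 1
  ext d
  constructor
  · rintro ⟨x, hx, y, hy, rfl⟩
    exact ⟨x, hx, y, hy, by rw [h hx, h hy]⟩
  · rintro ⟨x, hx, y, hy, rfl⟩
    exact ⟨x, hx, y, hy, by rw [h hx, h hy]⟩

/-- On a compact subinterval of `[a,b]`, a function continuous on `[a,b]` is bounded. -/
lemma exists_bound {F : ℝ → ℝ} (hF : ContinuousOn F (Icc a b)) {J : Set ℝ}
    (hJ : J ⊆ Icc a b) : ∃ C : ℝ, ∀ x ∈ J, |F x| ≤ C := by
  obtain ⟨C, hC⟩ := (isCompact_Icc (a := a) (b := b)).exists_bound_of_continuousOn hF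
  exact ⟨C, fun x hx => hC x (hJ hx)⟩

lemma osc_add_le {F G : ℝ → ℝ} {J : Set ℝ} {CF CG : ℝ}
    (hbF : ∀ x ∈ J, |F x| ≤ CF) (hbG : ∀ x ∈ J, |G x| ≤ CG) :
    osc (F + G) J ≤ osc F J + osc G J := by
  apply osc_le _ (add_nonneg (osc_nonneg F J) (osc_nonneg G J))
  intro x hx y hy
  calc |(F + G) x - (F + G) y| = |(F x - F y) + (G x - G y)| := by
        simp [Pi.add_apply]; ring_nf
    _ ≤ |F x - F y| + |G x - G y| := abs_add_le _ _
    _ ≤ osc F J + osc G J := add_le_add (le_osc hbF hx hy) (le_osc hbG hx hy)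

lemma osc_smul_le {F : ℝ → ℝ} {J : Set ℝ} {CF : ℝ} (c : ℝ)
    (hbF : ∀ x ∈ J, |F x| ≤ CF) :
    osc (fun x => c * F x) J ≤ |c| * osc F J := by
  apply osc_le _ (mul_nonneg (abs_nonneg c) (osc_nonneg F J))
  intro x hx y hy
  calc |c * F x - c * F y| = |c| * |F x - F y| := by rw [← abs_mul]; ring_nf
    _ ≤ |c| * osc F J := by
        exact mul_le_mul_of_nonneg_left (le_osc hbF hx hy) (abs_nonneg c)

lemma acstar_mono {F : ℝ → ℝ} {K K' : Set ℝ} (hsub : K' ⊆ K) (h : ACStar a b F K) :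
    ACStar a b F K' := by
  intro ε hε
  obtain ⟨δ, hδ, hh⟩ := h ε hε
  refine ⟨δ, hδ, fun D hD hlen => hh D ?_ hlen⟩
  obtain ⟨h1, h2, h3⟩ := hD
  exact ⟨h1, fun p hp => ⟨(h2 p hp).1, hsub (h2 p hp).2.1, hsub (h2 p hp).2.2.1,
    (h2 p hp).2.2.2⟩, h3⟩

lemma acstar_congr {F G : ℝ → ℝ} {K : Set ℝ} (h : Set.EqOn F G (Icc a b))
    (hF : ACStar a b F K) : ACStar a b G K := by
  intro ε hε
  obtain ⟨δ, hδ, hh⟩ := hF ε hε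
  refine ⟨δ, hδ, fun D hD hlen => ?_⟩
  have : (∑ p ∈ D, osc G (Icc p.1 p.2)) = ∑ p ∈ D, osc F (Icc p.1 p.2) := by
    apply Finset.sum_congr rfl
    intro p hp
    exact (osc_congr (fun x hx => h ((hD.2.1 p hp).2.2.2 hx))).symm
  rw [this]
  exact hh D hD hlen

lemma acstar_add {F G : ℝ → ℝ} {K : Set ℝ}
    (hFc : ContinuousOn F (Icc a b)) (hGc : ContinuousOn G (Icc a b))
    (hF : ACStar a b F K) (hG : ACStar a b G K) : ACStar a b (F + G) K := by
  intro ε hε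
  obtain ⟨δ₁, hδ₁, h₁⟩ := hF (ε / 2) (by linarith)
  obtain ⟨δ₂, hδ₂, h₂⟩ := hG (ε / 2) (by linarith)
  refine ⟨min δ₁ δ₂, lt_min hδ₁ hδ₂, fun D hD hlen => ?_⟩
  have key : (∑ p ∈ D, osc (F + G) (Icc p.1 p.2)) ≤
      (∑ p ∈ D, osc F (Icc p.1 p.2)) + ∑ p ∈ D, osc G (Icc p.1 p.2) := by
    rw [← Finset.sum_add_distrib]
    apply Finset.sum_le_sum
    intro p hp
    obtain ⟨CF, hCF⟩ := exists_bound hFc ((hD.2.1 p hp).2.2.2)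
    obtain ⟨CG, hCG⟩ := exists_bound hGc ((hD.2.1 p hp).2.2.2)
    exact osc_add_le hCF hCG
  have e1 := h₁ D hD (lt_of_lt_of_le hlen (min_le_left _ _))
  have e2 := h₂ D hD (lt_of_lt_of_le hlen (min_le_right _ _))
  linarith

lemma acstar_smul {F : ℝ → ℝ} {K : Set ℝ} (c : ℝ)
    (hFc : ContinuousOn F (Icc a b)) (hF : ACStar a b F K) :
    ACStar a b (fun x => c * F x) K := by
  intro ε hε
  obtain ⟨δ, hδ, h⟩ := hF (ε / (|c| + 1)) (by positivity)
  refine ⟨δ, hδ, fun D hD hlen => ?_⟩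
  have key : (∑ p ∈ D, osc (fun x => c * F x) (Icc p.1 p.2)) ≤
      |c| * ∑ p ∈ D, osc F (Icc p.1 p.2) := by
    rw [Finset.mul_sum]
    apply Finset.sum_le_sum
    intro p hp
    obtain ⟨CF, hCF⟩ := exists_bound hFc ((hD.2.1 p hp).2.2.2)
    exact osc_smul_le c hCF
  have e := h D hD hlen
  have hc1 : (0:ℝ) < |c| + 1 := by positivity
  have : |c| * ∑ p ∈ D, osc F (Icc p.1 p.2) < ε := by
    have hnn : (0:ℝ) ≤ ∑ p ∈ D, osc F (Icc p.1 p.2) :=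
      Finset.sum_nonneg fun p _ => osc_nonneg _ _
    calc |c| * ∑ p ∈ D, osc F (Icc p.1 p.2) ≤ (|c| + 1) * ∑ p ∈ D, osc F (Icc p.1 p.2) := by
          apply mul_le_mul_of_nonneg_right _ hnn; linarith
      _ < (|c| + 1) * (ε / (|c| + 1)) := by
          exact mul_lt_mul_of_pos_left e hc1
      _ = ε := by field_simp
  linarith

lemma acgstar_congr {F G : ℝ → ℝ} (h : Set.EqOn F G (Icc a b))
    (hF : ACGStar a b F (Icc a b)) : ACGStar a b G (Icc a b) := by
  obtain ⟨C, hC, hU⟩ := hF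
  exact ⟨C, fun n => ⟨(hC n).1, (hC n).2.1, acstar_congr h (hC n).2.2⟩, hU⟩

lemma acgstar_add {F G : ℝ → ℝ}
    (hFc : ContinuousOn F (Icc a b)) (hGc : ContinuousOn G (Icc a b))
    (hF : ACGStar a b F (Icc a b)) (hG : ACGStar a b G (Icc a b)) :
    ACGStar a b (F + G) (Icc a b) := by
  obtain ⟨C, hC, hUC⟩ := hF
  obtain ⟨D, hD, hUD⟩ := hG
  refine ⟨fun k => C (Nat.unpair k).1 ∩ D (Nat.unpair k).2, fun k => ?_, ?_⟩
  · refine ⟨((hC _).1).inter ((hD _).1), fun x hx => (hC _).2.1 hx.1, ?_⟩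
    exact acstar_add hFc hGc (acstar_mono Set.inter_subset_left (hC _).2.2)
      (acstar_mono Set.inter_subset_right (hD _).2.2)
  · apply Set.Subset.antisymm
    · intro x hx
      have hx1 : x ∈ ⋃ n, C n := hUC ▸ hx
      have hx2 : x ∈ ⋃ n, D n := hUD ▸ hx
      obtain ⟨_, ⟨n, rfl⟩, hn⟩ := hx1
      obtain ⟨_, ⟨m, rfl⟩, hm⟩ := hx2
      exact Set.mem_iUnion.2 ⟨Nat.pair n m, by simp [Nat.unpair_pair, hn, hm]⟩
    · intro x hx
      obtain ⟨_, ⟨k, rfl⟩, hk⟩ := hx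
      exact (hC _).2.1 hk.1

lemma acgstar_smul {F : ℝ → ℝ} (c : ℝ) (hFc : ContinuousOn F (Icc a b))
    (hF : ACGStar a b F (Icc a b)) : ACGStar a b (fun x => c * F x) (Icc a b) := by
  obtain ⟨C, hC, hU⟩ := hF
  exact ⟨C, fun n => ⟨(hC n).1, (hC n).2.1, acstar_smul c hFc (hC n).2.2⟩, hU⟩

end DenAux
namespace DenAux

variable {a b : ℝ}

lemma volume_image_Icc_le {F : ℝ → ℝ} {c d : ℝ} (hcd : c ≤ d)
    (hF : ContinuousOn F (Icc c d)) :
    volume (F '' Icc c d) ≤ ENNReal.ofReal (osc F (Icc c d)) := by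
  have hne : (Icc c d).Nonempty := nonempty_Icc.2 hcd
  obtain ⟨x₁, hx₁, hmin⟩ := isCompact_Icc.exists_isMinOn hne hF
  obtain ⟨x₂, hx₂, hmax⟩ := isCompact_Icc.exists_isMaxOn hne hF
  obtain ⟨C, hC⟩ := isCompact_Icc.exists_bound_of_continuousOn hF
  have himg : F '' Icc c d ⊆ Icc (F x₁) (F x₂) := by
    rintro _ ⟨y, hy, rfl⟩
    exact ⟨hmin hy, hmax hy⟩
  calc volume (F '' Icc c d) ≤ volume (Icc (F x₁) (F x₂)) := measure_mono himg
    _ = ENNReal.ofReal (F x₂ - F x₁) := Real.volume_Icc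
    _ ≤ ENNReal.ofReal (osc F (Icc c d)) := by
        apply ENNReal.ofReal_le_ofReal
        calc F x₂ - F x₁ ≤ |F x₂ - F x₁| := le_abs_self _
          _ ≤ osc F (Icc c d) := le_osc (fun x hx => (Real.norm_eq_abs _ ▸ hC x hx)) hx₂ hx₁

/-- Luzin (N) property on an `AC*` set. -/
lemma luzinN {F : ℝ → ℝ} (hab : a < b) {K Z : Set ℝ} (hK : IsClosed K)
    (hKsub : K ⊆ Icc a b) (hAC : ACStar a b F K) (hFc : ContinuousOn F (Icc a b))
    (hZK : Z ⊆ K) (hZ : volume Z = 0) : volume (F '' Z) = 0 := by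
  refine le_antisymm ?_ zero_le
  have main : ∀ ε : ℝ, 0 < ε → volume (F '' Z) ≤ ENNReal.ofReal ε := by
    intro ε hε
    obtain ⟨δ, hδpos, hACδ⟩ := hAC ε hε
    have hZ' : volume Z < ENNReal.ofReal δ := by
      rw [hZ]; exact ENNReal.ofReal_pos.2 hδpos
    obtain ⟨U₀, hZU₀, hU₀open, hU₀vol⟩ := Set.exists_isOpen_lt_of_lt Z _ hZ'
    set U : Set ℝ := U₀ ∩ Ioo (a-1) (b+1) with hUdef
    have hUopen : IsOpen U := hU₀open.inter isOpen_Ioo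
    have hZU : Z ⊆ U := by
      intro z hz
      have hzI : z ∈ Icc a b := hKsub (hZK hz)
      exact ⟨hZU₀ hz, by constructor <;> [linarith [hzI.1]; linarith [hzI.2]]⟩
    have hUvol : volume U < ENNReal.ofReal δ :=
      lt_of_le_of_lt (measure_mono inter_subset_left) hU₀vol
    set J : ℝ → Set ℝ := fun x => connectedComponentIn U x with hJdef
    have hJopen : ∀ x, IsOpen (J x) := fun x => hUopen.connectedComponentIn
    have hJsub : ∀ x, J x ⊆ U := fun x => connectedComponentIn_subset U x
    have hJmem : ∀ x ∈ Z, x ∈ J x := fun x hx => mem_connectedComponentIn (hZU hx)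
    have hJord : ∀ x, (J x).OrdConnected := fun x =>
      (isPreconnected_connectedComponentIn).ordConnected
    have hJeq : ∀ x y z : ℝ, z ∈ J x → z ∈ J y → J x = J y := by
      intro x y z h1 h2
      show connectedComponentIn U x = connectedComponentIn U y
      rw [connectedComponentIn_eq h1, connectedComponentIn_eq h2]
    set S : Set ℝ → Set ℝ := fun T => K ∩ closure T with hSdef
    have hSbddB : ∀ T, BddBelow (S T) := fun T =>
      (bddBelow_Icc : BddBelow (Icc a b)).mono fun z hz => hKsub hz.1
    have hSbddA : ∀ T, BddAbove (S T) := fun T =>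
      (bddAbove_Icc (a := a) (b := b)).mono fun z hz => hKsub hz.1
    set c : Set ℝ → ℝ := fun T => sInf (S T) with hcdef
    set d : Set ℝ → ℝ := fun T => sSup (S T) with hddef
    have hSne : ∀ x ∈ Z, (S (J x)).Nonempty := fun x hx =>
      ⟨x, hZK hx, subset_closure (hJmem x hx)⟩
    have hcS : ∀ x ∈ Z, c (J x) ∈ S (J x) := fun x hx =>
      (hK.inter isClosed_closure).csInf_mem (hSne x hx) (hSbddB _)
    have hdS : ∀ x ∈ Z, d (J x) ∈ S (J x) := fun x hx =>
      (hK.inter isClosed_closure).csSup_mem (hSne x hx) (hSbddA _)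
    have hcd : ∀ x ∈ Z, c (J x) ≤ d (J x) := fun x hx =>
      csInf_le_csSup (hSne x hx) (hSbddB _) (hSbddA _)
    have hmemIcc : ∀ T, ∀ z ∈ S T, z ∈ Icc (c T) (d T) := fun T z hz =>
      ⟨csInf_le (hSbddB _) hz, le_csSup (hSbddA _) hz⟩
    -- interior interval is inside the component
    have hIoo : ∀ x ∈ Z, Ioo (c (J x)) (d (J x)) ⊆ J x := by
      intro x hx t ht
      have hcx : c (J x) ∈ closure (J x) := (hcS x hx).2
      have hdx : d (J x) ∈ closure (J x) := (hdS x hx).2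
      obtain ⟨s', hs', hds'⟩ := Metric.mem_closure_iff.1 hcx (t - c (J x)) (by linarith [ht.1])
      obtain ⟨t', ht', hdt'⟩ := Metric.mem_closure_iff.1 hdx (d (J x) - t) (by linarith [ht.2])
      rw [Real.dist_eq] at hds' hdt'
      have h1 : s' < t := by
        have := abs_lt.1 hds'; linarith [this.1, this.2]
      have h2 : t < t' := by
        have := abs_lt.1 hdt'; linarith [this.1, this.2]
      exact (hJord x).out hs' ht' ⟨le_of_lt h1, le_of_lt h2⟩
    -- separation of distinct components
    have hsep : ∀ x ∈ Z, ∀ y ∈ Z, J x ≠ J y →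
        d (J x) ≤ c (J y) ∨ d (J y) ≤ c (J x) := by
      intro x hx y hy hne
      have hdisj : ∀ z : ℝ, z ∈ J x → z ∈ J y → False := fun z h1 h2 =>
        hne (hJeq x y z h1 h2)
      have key : (∀ s ∈ J x, ∀ t ∈ J y, s ≤ t) ∨ (∀ t ∈ J y, ∀ s ∈ J x, t ≤ s) := by
        by_contra hcon
        push_neg at hcon
        obtain ⟨⟨s, hs, t, ht, hts⟩, ⟨t', ht', s', hs', hst⟩⟩ := hcon
        rcases le_or_gt s' t with h | h
        · exact hdisj t ((hJord x).out hs' hs ⟨h, le_of_lt hts⟩) ht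
        · exact hdisj s' hs' ((hJord y).out ht ht' ⟨le_of_lt h, le_of_lt hst⟩)
      rcases key with h | h
      · left
        have step1 : ∀ t ∈ J y, d (J x) ≤ t := by
          intro t ht
          have : closure (J x) ⊆ Iic t :=
            closure_minimal (fun s hs => h s hs t ht) isClosed_Iic
          exact this (hdS x hx).2
        have : closure (J y) ⊆ Ici (d (J x)) := closure_minimal step1 isClosed_Ici
        exact this (hcS y hy).2
      · right
        have step1 : ∀ s ∈ J x, d (J y) ≤ s := by
          intro s hs
          have : closure (J y) ⊆ Iic s :=
            closure_minimal (fun t ht => h t ht s hs) isClosed_Iic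
          exact this (hdS y hy).2
        have : closure (J x) ⊆ Ici (d (J y)) := closure_minimal step1 isClosed_Ici
        exact this (hcS x hx).2
    -- rationals in components
    have hQ : ∀ x ∈ Z, ∃ q : ℚ, (q : ℝ) ∈ J x := by
      intro x hx
      rcases Metric.isOpen_iff.1 (hJopen x) x (hJmem x hx) with ⟨r, hr, hball⟩
      rcases exists_rat_btwn (show x - r < x + r by linarith) with ⟨q, hq1, hq2⟩
      refine ⟨q, hball ?_⟩
      rw [Metric.mem_ball, Real.dist_eq, abs_lt]
      constructor <;> linarith
    -- the countable collection of intervals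
    set P : Set (ℝ × ℝ) := (fun x => (c (J x), d (J x))) '' Z with hPdef
    have hPc : P.Countable := by
      classical
      set φ : ℚ → ℝ × ℝ := fun q =>
        if h : ∃ x ∈ Z, (q : ℝ) ∈ J x then (c (J h.choose), d (J h.choose)) else (1, 0) with hφ
      have hsub : P ⊆ Set.range φ := by
        rintro _ ⟨x, hx, rfl⟩
        obtain ⟨q, hq⟩ := hQ x hx
        have hex : ∃ x' ∈ Z, (q : ℝ) ∈ J x' := ⟨x, hx, hq⟩
        refine ⟨q, ?_⟩
        have hJJ : J hex.choose = J x := hJeq _ _ q hex.choose_spec.2 hq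
        simp only [hφ, dif_pos hex, hJJ]
      exact (Set.countable_range φ).mono hsub
    have hPfact : ∀ p ∈ P, ∃ x ∈ Z, p = (c (J x), d (J x)) := by
      rintro _ ⟨x, hx, rfl⟩; exact ⟨x, hx, rfl⟩
    -- covering
    have hcover : F '' Z ⊆ ⋃ p ∈ P, F '' Icc p.1 p.2 := by
      rintro _ ⟨z, hz, rfl⟩
      refine Set.mem_biUnion ⟨z, hz, rfl⟩ ⟨z, ?_, rfl⟩
      exact hmemIcc (J z) z ⟨hZK hz, subset_closure (hJmem z hz)⟩
    -- per-interval bound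
    have hper : ∀ p ∈ P, volume (F '' Icc p.1 p.2) ≤ ENNReal.ofReal (osc F (Icc p.1 p.2)) := by
      intro p hp
      obtain ⟨x, hx, rfl⟩ := hPfact p hp
      have h1 : c (J x) ∈ Icc a b := hKsub (hcS x hx).1
      have h2 : d (J x) ∈ Icc a b := hKsub (hdS x hx).1
      have hsub : Icc (c (J x)) (d (J x)) ⊆ Icc a b := Icc_subset_Icc h1.1 h2.2
      exact volume_image_Icc_le (hcd x hx) (hFc.mono hsub)
    -- finite-sum bound
    have hfin : ∀ D : Finset (ℝ × ℝ), ↑D ⊆ P →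
        (∑ p ∈ D, ENNReal.ofReal (osc F (Icc p.1 p.2))) ≤ ENNReal.ofReal ε := by
      intro D hDP
      rcases D.eq_empty_or_nonempty with rfl | hDne
      · simp [ENNReal.ofReal_le_ofReal (le_of_lt hε)]
      -- endpoints data
      have hend : ∀ p ∈ D, p.1 ≤ p.2 ∧ p.1 ∈ K ∧ p.2 ∈ K ∧ Icc p.1 p.2 ⊆ Icc a b := by
        intro p hp
        obtain ⟨x, hx, rfl⟩ := hPfact p (hDP hp)
        have h1 := hKsub (hcS x hx).1
        have h2 := hKsub (hdS x hx).1
        exact ⟨hcd x hx, (hcS x hx).1, (hdS x hx).1, Icc_subset_Icc h1.1 h2.2⟩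
      have hpair : (↑D : Set (ℝ × ℝ)).Pairwise fun p q => p.2 ≤ q.1 ∨ q.2 ≤ p.1 := by
        intro p hp q hq hpq
        obtain ⟨x, hx, rfl⟩ := hPfact p (hDP hp)
        obtain ⟨y, hy, rfl⟩ := hPfact q (hDP hq)
        have hJne : J x ≠ J y := by
          intro h; exact hpq (by rw [h])
        exact hsep x hx y hy hJne
      have hprep : IsPrePartition a b K D := ⟨hDne, hend, hpair⟩
      -- length bound
      have hIooD : ∀ p ∈ D, ∃ x ∈ Z, p = (c (J x), d (J x)) ∧ Ioo p.1 p.2 ⊆ U := by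
        intro p hp
        obtain ⟨x, hx, rfl⟩ := hPfact p (hDP hp)
        exact ⟨x, hx, rfl, (hIoo x hx).trans (hJsub x)⟩
      have hdisjIoo : (↑D : Set (ℝ × ℝ)).PairwiseDisjoint fun p : ℝ × ℝ => Ioo p.1 p.2 := by
        intro p hp q hq hpq
        rcases hpair hp hq hpq with h | h
        · apply Set.disjoint_left.2
          rintro t ⟨_, ht2⟩ ⟨ht3, _⟩
          linarith
        · apply Set.disjoint_left.2
          rintro t ⟨ht1, _⟩ ⟨_, ht4⟩
          linarith
      have hlen : (∑ p ∈ D, (p.2 - p.1)) < δ := by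
        have e1 : (∑ p ∈ D, volume (Ioo p.1 p.2)) = volume (⋃ p ∈ D, Ioo p.1 p.2) :=
          (measure_biUnion_finset hdisjIoo (fun p _ => measurableSet_Ioo)).symm
        have e2 : volume (⋃ p ∈ D, Ioo p.1 p.2) ≤ volume U := by
          apply measure_mono
          apply Set.iUnion₂_subset
          intro p hp
          obtain ⟨x, hx, rfl, hsubU⟩ := hIooD p hp
          exact hsubU
        have e3 : (∑ p ∈ D, ENNReal.ofReal (p.2 - p.1)) < ENNReal.ofReal δ := by
          calc (∑ p ∈ D, ENNReal.ofReal (p.2 - p.1))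
              = ∑ p ∈ D, volume (Ioo p.1 p.2) := by
                apply Finset.sum_congr rfl
                intro p hp
                rw [Real.volume_Ioo]
            _ = volume (⋃ p ∈ D, Ioo p.1 p.2) := e1
            _ ≤ volume U := e2
            _ < ENNReal.ofReal δ := hUvol
        have e4 : ENNReal.ofReal (∑ p ∈ D, (p.2 - p.1)) < ENNReal.ofReal δ := by
          rwa [ENNReal.ofReal_sum_of_nonneg (fun p hp => by linarith [(hend p hp).1])]
        exact lt_of_not_ge fun hcon => absurd e4 (not_lt.2 (ENNReal.ofReal_le_ofReal hcon))
      have hosc := hACδ D hprep hlen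
      calc (∑ p ∈ D, ENNReal.ofReal (osc F (Icc p.1 p.2)))
          = ENNReal.ofReal (∑ p ∈ D, osc F (Icc p.1 p.2)) :=
            (ENNReal.ofReal_sum_of_nonneg (fun p _ => osc_nonneg _ _)).symm
        _ ≤ ENNReal.ofReal ε := ENNReal.ofReal_le_ofReal (le_of_lt hosc)
    -- put it together
    calc volume (F '' Z) ≤ volume (⋃ p ∈ P, F '' Icc p.1 p.2) := measure_mono hcover
      _ ≤ ∑' p : P, volume (F '' Icc (p : ℝ × ℝ).1 (p : ℝ × ℝ).2) :=
          measure_biUnion_le volume hPc _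
      _ ≤ ∑' p : P, ENNReal.ofReal (osc F (Icc (p : ℝ × ℝ).1 (p : ℝ × ℝ).2)) :=
          ENNReal.tsum_le_tsum fun p => hper p p.2
      _ ≤ ENNReal.ofReal ε := by
          rw [ENNReal.tsum_eq_iSup_sum]
          apply iSup_le
          intro s
          have := hfin (s.image Subtype.val) (by
            intro p hp
            simp only [Finset.coe_image] at hp
            obtain ⟨q, _, rfl⟩ := hp
            exact q.2)
          rwa [Finset.sum_image (fun x _ y _ h => Subtype.val_injective h)] at this
  apply ENNReal.le_of_forall_pos_le_add
  intro ε hε _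
  rw [zero_add]
  calc volume (F '' Z) ≤ ENNReal.ofReal (ε : ℝ) := main ε (by exact_mod_cast hε)
    _ = (ε : ENNReal) := ENNReal.ofReal_coe_nnreal

end DenAux
namespace DenAux

variable {a b : ℝ}

/-- An `ACG*` function with a.e. zero derivative on `[a,b]` is constant there. -/
theorem constant_of_acgstar (hab : a < b) {F : ℝ → ℝ} (hFc : ContinuousOn F (Icc a b))
    (hACG : ACGStar a b F (Icc a b))
    (hder : ∀ᵐ x ∂(volume.restrict (Icc a b)), HasDerivAt F 0 x) :
    ∀ x ∈ Icc a b, F x = F a := by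
  have himg : volume (F '' Icc a b) = 0 := by
    have h0 : volume ({x | ¬ HasDerivAt F 0 x} ∩ Icc a b) = 0 := by
      have := hder
      rw [MeasureTheory.ae_iff, Measure.restrict_apply' measurableSet_Icc] at this
      exact this
    set N := toMeasurable volume ({x | ¬ HasDerivAt F 0 x} ∩ Icc a b) with hNdef
    have hNmeas : MeasurableSet N := measurableSet_toMeasurable _ _
    have hN0 : volume N = 0 := by
      rw [hNdef, measure_toMeasurable]; exact h0
    set A := Icc a b \ N with hAdef
    have hAmeas : MeasurableSet A := measurableSet_Icc.diff hNmeas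
    have hAder : ∀ x ∈ A, HasDerivAt F 0 x := by
      intro x hx
      by_contra hcon
      exact hx.2 (subset_toMeasurable _ _ ⟨hcon, hx.1⟩)
    have hA0 : volume (F '' A) = 0 := by
      have hkey := MeasureTheory.addHaar_image_le_lintegral_abs_det_fderiv
        (volume : Measure ℝ) hAmeas (f' := fun _ => (0 : ℝ →L[ℝ] ℝ)) (f := F)
        (fun x hx => by
          have h := (hAder x hx).hasFDerivAt.hasFDerivWithinAt (s := A)
          have hz : ContinuousLinearMap.toSpanSingleton ℝ (0 : ℝ) = 0 := by
            ext y; simp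
          rwa [hz] at h)
      have hdet : LinearMap.det (0 : ℝ →ₗ[ℝ] ℝ) = 0 := by
        have : Nonempty (Fin 1) := ⟨0⟩
        simpa using LinearMap.det_zero' (Basis.singleton (Fin 1) ℝ)
      rw [show (∫⁻ x in A, ENNReal.ofReal |((fun _ => (0 : ℝ →L[ℝ] ℝ)) x).det| ∂volume) = 0 by
        simp only [ContinuousLinearMap.det, ContinuousLinearMap.coe_zero] at *
        simp [hdet]] at hkey
      exact le_antisymm hkey zero_le
    have hN' : volume (F '' (N ∩ Icc a b)) = 0 := by
      obtain ⟨C, hC, hU⟩ := hACG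
      have hsub : F '' (N ∩ Icc a b) ⊆ ⋃ n, F '' (N ∩ C n) := by
        rintro _ ⟨x, hx, rfl⟩
        have hxU : x ∈ ⋃ n, C n := hU ▸ hx.2
        obtain ⟨n, hn⟩ := Set.mem_iUnion.1 hxU
        exact Set.mem_iUnion.2 ⟨n, ⟨x, ⟨hx.1, hn⟩, rfl⟩⟩
      apply measure_mono_null hsub
      apply measure_iUnion_null
      intro n
      exact luzinN hab (hC n).1 (hC n).2.1 (hC n).2.2 hFc Set.inter_subset_right
        (measure_mono_null Set.inter_subset_left hN0)
    have hsplit : Icc a b ⊆ A ∪ (N ∩ Icc a b) := by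
      intro x hx
      by_cases hN : x ∈ N
      · exact Or.inr ⟨hN, hx⟩
      · exact Or.inl ⟨hx, hN⟩
    apply measure_mono_null (t := F '' A ∪ F '' (N ∩ Icc a b))
    · rw [← Set.image_union]
      exact Set.image_mono hsplit
    · exact measure_union_null hA0 hN'
  intro x hx
  by_contra hne
  have haI : a ∈ Icc a b := ⟨le_refl a, le_of_lt hab⟩
  have hax : a ≤ x := hx.1
  have hsubI : Icc a x ⊆ Icc a b := Icc_subset_Icc le_rfl hx.2
  rcases lt_or_gt_of_ne hne with h | h
  · -- F x < F a
    have := intermediate_value_Icc' hax (hFc.mono hsubI)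
    have hsub2 : Icc (F x) (F a) ⊆ F '' Icc a b := this.trans (Set.image_mono hsubI)
    have : volume (Icc (F x) (F a)) = 0 := measure_mono_null hsub2 himg
    rw [Real.volume_Icc] at this
    have := ENNReal.ofReal_eq_zero.1 this
    linarith
  · have := intermediate_value_Icc hax (hFc.mono hsubI)
    have hsub2 : Icc (F a) (F x) ⊆ F '' Icc a b := this.trans (Set.image_mono hsubI)
    have : volume (Icc (F a) (F x)) = 0 := measure_mono_null hsub2 himg
    rw [Real.volume_Icc] at this
    have := ENNReal.ofReal_eq_zero.1 this
    linarith

/-- Uniqueness of the indefinite Denjoy integral. -/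
theorem denjoy_unique (hab : a < b) {f₁ f₂ F₁ F₂ : ℝ → ℝ}
    (h₁ : HasDenjoyIntegralFn a b f₁ F₁) (h₂ : HasDenjoyIntegralFn a b f₂ F₂)
    (hf : f₁ =ᵐ[volume.restrict (Icc a b)] f₂) :
    Set.EqOn F₁ F₂ (Icc a b) := by
  obtain ⟨hc₁, ha₁, hg₁, hd₁⟩ := h₁
  obtain ⟨hc₂, ha₂, hg₂, hd₂⟩ := h₂
  set G : ℝ → ℝ := F₁ + (fun x => (-1 : ℝ) * F₂ x) with hGdef
  have hGc : ContinuousOn G (Icc a b) := by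
    apply hc₁.add
    exact (continuousOn_const (c := (-1:ℝ))).mul hc₂
  have hGacg : ACGStar a b G (Icc a b) :=
    acgstar_add hc₁ ((continuousOn_const (c := (-1:ℝ))).mul hc₂) hg₁
      (acgstar_smul (-1) hc₂ hg₂)
  have hGder : ∀ᵐ x ∂(volume.restrict (Icc a b)), HasDerivAt G 0 x := by
    filter_upwards [hd₁, hd₂, hf] with x hx₁ hx₂ hxf
    have : HasDerivAt G (f₁ x + (-1) * f₂ x) x := hx₁.add (hx₂.const_mul (-1))
    simpa [hxf] using this
  have hG0 : ∀ x ∈ Icc a b, G x = G a := constant_of_acgstar hab hGc hGacg hGder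
  intro x hx
  have h1 := hG0 x hx
  have hGa : G a = 0 := by simp [hGdef, ha₁, ha₂]
  have : G x = 0 := h1.trans hGa
  simp only [hGdef, Pi.add_apply] at this
  linarith

end DenAux
namespace DenAux

variable {a b : ℝ}

lemma primitive_hasDerivAt {f : ℝ → ℝ} (hf : Continuous f) (x : ℝ) :
    HasDerivAt (fun u => ∫ t in a..u, f t) (f x) x :=
  intervalIntegral.integral_hasDerivAt_right (hf.intervalIntegrable a x)
    (hf.stronglyMeasurableAtFilter _ _) hf.continuousAt

lemma primitive_continuous {f : ℝ → ℝ} (hf : Continuous f) :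
    Continuous (fun u => ∫ t in a..u, f t) := by
  apply continuous_iff_continuousAt.2
  intro x
  exact (primitive_hasDerivAt hf x).differentiableAt.continuousAt

lemma primitive_acgstar (hab : a < b) {f : ℝ → ℝ} (hf : Continuous f) :
    ACGStar a b (fun u => ∫ t in a..u, f t) (Icc a b) := by
  obtain ⟨L, hL⟩ := isCompact_Icc.exists_bound_of_continuousOn (hf.continuousOn (s := Icc a b))
  have hL0 : 0 ≤ L := le_trans (norm_nonneg _) (hL a ⟨le_rfl, le_of_lt hab⟩)
  refine ⟨fun _ => Icc a b, fun n => ⟨isClosed_Icc, le_rfl, ?_⟩, (Set.iUnion_const _).symm⟩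
  intro ε hε
  refine ⟨ε / (L + 1), by positivity, fun D hD hlen => ?_⟩
  set F : ℝ → ℝ := fun u => ∫ t in a..u, f t with hFdef
  have hosc : ∀ p ∈ D, osc F (Icc p.1 p.2) ≤ L * (p.2 - p.1) := by
    intro p hp
    obtain ⟨hple, _, _, hpsub⟩ := hD.2.1 p hp
    apply osc_le _ (mul_nonneg hL0 (by linarith))
    intro x hx y hy
    have hdiff : F x - F y = ∫ t in y..x, f t := by
      rw [hFdef]
      exact intervalIntegral.integral_interval_sub_left (hf.intervalIntegrable a x)
        (hf.intervalIntegrable a y)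
    rw [hdiff]
    have hbound : ∀ t ∈ Set.uIoc y x, ‖f t‖ ≤ L := by
      intro t ht
      have : t ∈ Set.uIcc y x := Set.Ioc_subset_Icc_self ht
      have h2 : Set.uIcc y x ⊆ Icc p.1 p.2 := Set.uIcc_subset_Icc hy hx
      exact hL t (hpsub (h2 this))
    calc |∫ t in y..x, f t| ≤ L * |x - y| :=
          intervalIntegral.norm_integral_le_of_norm_le_const hbound
      _ ≤ L * (p.2 - p.1) := by
          apply mul_le_mul_of_nonneg_left _ hL0
          rw [abs_le]
          constructor <;> [linarith [hx.1, hx.2, hy.1, hy.2]; linarith [hx.1, hx.2, hy.1, hy.2]]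
  have hsum : (∑ p ∈ D, osc F (Icc p.1 p.2)) ≤ L * ∑ p ∈ D, (p.2 - p.1) := by
    rw [Finset.mul_sum]
    exact Finset.sum_le_sum hosc
  have hlen0 : (0:ℝ) ≤ ∑ p ∈ D, (p.2 - p.1) :=
    Finset.sum_nonneg fun p hp => by linarith [(hD.2.1 p hp).1]
  calc (∑ p ∈ D, osc F (Icc p.1 p.2)) ≤ L * ∑ p ∈ D, (p.2 - p.1) := hsum
    _ ≤ (L + 1) * ∑ p ∈ D, (p.2 - p.1) := by nlinarith
    _ < (L + 1) * (ε / (L + 1)) := by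
        apply mul_lt_mul_of_pos_left hlen _
        positivity
    _ = ε := by field_simp

lemma primitive_hasDenjoy (hab : a < b) {f : ℝ → ℝ} (hf : Continuous f) :
    HasDenjoyIntegralFn a b f (fun u => ∫ t in a..u, f t) := by
  refine ⟨(primitive_continuous hf).continuousOn, intervalIntegral.integral_same,
    primitive_acgstar hab hf, ?_⟩
  exact Filter.Eventually.of_forall fun x => primitive_hasDerivAt hf x

lemma hasDenjoy_congr_ae {f g F : ℝ → ℝ} (hF : HasDenjoyIntegralFn a b f F)
    (hfg : f =ᵐ[volume.restrict (Icc a b)] g) : HasDenjoyIntegralFn a b g F := by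
  refine ⟨hF.1, hF.2.1, hF.2.2.1, ?_⟩
  filter_upwards [hF.2.2.2, hfg] with x hx hxe
  rw [← hxe]
  exact hx

/-- Extend a Denjoy primitive to a globally continuous function. -/
lemma exists_contMap_hasDenjoy (hab : a < b) {f : ℝ → ℝ}
    (hf : DenjoyIntegrable a b f) : ∃ F : C(ℝ, ℝ), HasDenjoyIntegralFn a b f ⇑F := by
  obtain ⟨F, hFc, hFa, hFacg, hFder⟩ := hf
  set cl : ℝ → ℝ := fun x => max a (min b x) with hcl
  have hclcont : Continuous cl := continuous_const.max (continuous_const.min continuous_id)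
  have hclmem : ∀ x, cl x ∈ Icc a b := fun x =>
    ⟨le_max_left _ _, max_le (le_of_lt hab) (min_le_left _ _)⟩
  have hcleq : ∀ x ∈ Icc a b, cl x = x := by
    intro x hx
    rw [hcl]
    simp only [min_eq_right hx.2]
    exact max_eq_right hx.1
  set G : ℝ → ℝ := F ∘ cl with hG
  have hGcont : Continuous G := hFc.comp_continuous hclcont hclmem
  have hGeq : Set.EqOn G F (Icc a b) := fun x hx => by
    simp only [hG, Function.comp_apply, hcleq x hx]
  refine ⟨⟨G, hGcont⟩, hGcont.continuousOn, ?_, ?_, ?_⟩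
  · show G a = 0
    rw [hGeq ⟨le_rfl, le_of_lt hab⟩]; exact hFa
  · exact acgstar_congr (fun x hx => (hGeq hx).symm) hFacg
  · have hIoo : ∀ᵐ x ∂(volume.restrict (Icc a b)), x ∈ Ioo a b := by
      rw [MeasureTheory.ae_iff]
      rw [Measure.restrict_apply' measurableSet_Icc]
      apply measure_mono_null (t := ({a, b} : Set ℝ))
      · intro x hx
        simp only [Set.mem_setOf_eq, Set.mem_Ioo, not_and_or, not_lt] at hx
        rcases hx.1 with h | h
        · exact Or.inl (le_antisymm h hx.2.1)
        · exact Or.inr (le_antisymm hx.2.2 h)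
      · exact Set.Finite.measure_zero (Set.toFinite _) _
    filter_upwards [hFder, hIoo] with x hx hxIoo
    apply hx.congr_of_eventuallyEq
    have : Ioo a b ∈ nhds x := isOpen_Ioo.mem_nhds hxIoo
    filter_upwards [this] with y hy
    exact hGeq (Set.Ioo_subset_Icc_self hy)

lemma continuous_eqOn_of_ae (hab : a < b) {f g : ℝ → ℝ} (hf : Continuous f)
    (hg : Continuous g) (h : f =ᵐ[volume.restrict (Icc a b)] g) :
    Set.EqOn f g (Icc a b) := by
  intro x hx
  by_contra hne
  set U : Set ℝ := {y | f y ≠ g y} with hU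
  have hUopen : IsOpen U := isOpen_ne_fun hf hg
  have hUnull : volume (U ∩ Icc a b) = 0 := by
    have := h
    rw [Filter.EventuallyEq, MeasureTheory.ae_iff,
      Measure.restrict_apply' measurableSet_Icc] at this
    exact this
  obtain ⟨η, hη, hball⟩ := Metric.isOpen_iff.1 hUopen x hne
  set c := max a (x - η) with hc
  set d := min b (x + η) with hd
  have hcd : c < d := by
    apply max_lt
    · exact lt_min hab (lt_of_le_of_lt hx.1 (by linarith))
    · exact lt_min (by linarith [hx.2]) (by linarith)
  have hIoosub : Ioo c d ⊆ U ∩ Icc a b := by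
    intro y hy
    have h1 : a ≤ y := le_of_lt (lt_of_le_of_lt (le_max_left _ _) hy.1)
    have h2 : y ≤ b := le_of_lt (lt_of_lt_of_le hy.2 (min_le_left _ _))
    have h3 : x - η < y := lt_of_le_of_lt (le_max_right _ _) hy.1
    have h4 : y < x + η := lt_of_lt_of_le hy.2 (min_le_right _ _)
    refine ⟨hball ?_, h1, h2⟩
    rw [Metric.mem_ball, Real.dist_eq, abs_lt]
    constructor <;> linarith
  have : volume (Ioo c d) = 0 := measure_mono_null hIoosub hUnull
  rw [Real.volume_Ioo] at this
  have := ENNReal.ofReal_eq_zero.1 this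
  linarith

/-- `Xop` applied to something with a continuous Denjoy primitive. -/
lemma Xop_eq (hab : a < b) {g : MSpace a b} {G : C(ℝ, ℝ)}
    (hG : HasDenjoyIntegralFn a b (fun x => g x) ⇑G) :
    Xop a b g = AEEqFun.mk ⇑G G.continuous.aestronglyMeasurable := by
  have hex : ∃ F : C(ℝ, ℝ), HasDenjoyIntegralFn a b (fun x => g x) ⇑F := ⟨G, hG⟩
  rw [Xop, dif_pos hex]
  apply AEEqFun.mk_eq_mk.2
  have hch := Classical.choose_spec hex
  have heq := denjoy_unique hab hch hG Filter.EventuallyEq.rfl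
  rw [Filter.EventuallyEq, MeasureTheory.ae_restrict_iff' measurableSet_Icc]
  exact Filter.Eventually.of_forall fun x hx => heq hx

end DenAux
namespace DenAux

variable {a b : ℝ}

lemma Xop_add (hab : a < b) {g h : MSpace a b}
    (hg : DenjoyIntegrable a b (fun x => g x)) (hh : DenjoyIntegrable a b (fun x => h x)) :
    Xop a b (g + h) = Xop a b g + Xop a b h := by
  obtain ⟨Fg, hFg⟩ := exists_contMap_hasDenjoy hab hg
  obtain ⟨Fh, hFh⟩ := exists_contMap_hasDenjoy hab hh
  have hsum : HasDenjoyIntegralFn a b (fun x => (g + h) x) ⇑(Fg + Fh) := by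
    have h1 : HasDenjoyIntegralFn a b (fun x => g x + h x) ⇑(Fg + Fh) := by
      refine ⟨(Fg.continuous.add Fh.continuous).continuousOn, ?_, ?_, ?_⟩
      · show Fg a + Fh a = 0
        rw [hFg.2.1, hFh.2.1, add_zero]
      · have : ⇑(Fg + Fh) = ⇑Fg + ⇑Fh := rfl
        rw [this]
        exact acgstar_add Fg.continuous.continuousOn Fh.continuous.continuousOn
          hFg.2.2.1 (acgstar_congr (fun x _ => rfl) hFh.2.2.1)
      · filter_upwards [hFg.2.2.2, hFh.2.2.2] with x hx hy
        exact hx.add hy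
    exact hasDenjoy_congr_ae h1 (by
      filter_upwards [AEEqFun.coeFn_add g h] with x hx
      exact hx.symm)
  rw [Xop_eq hab hsum, Xop_eq hab hFg, Xop_eq hab hFh, AEEqFun.mk_add_mk]
  rfl

lemma Xop_smul (hab : a < b) (r : ℝ) {g : MSpace a b}
    (hg : DenjoyIntegrable a b (fun x => g x)) :
    Xop a b (r • g) = r • Xop a b g := by
  obtain ⟨Fg, hFg⟩ := exists_contMap_hasDenjoy hab hg
  have hsm : HasDenjoyIntegralFn a b (fun x => (r • g) x) ⇑(r • Fg) := by
    have h1 : HasDenjoyIntegralFn a b (fun x => r * g x) ⇑(r • Fg) := by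
      refine ⟨(Fg.continuous.const_smul r).continuousOn, ?_, ?_, ?_⟩
      · show r • Fg a = 0
        rw [hFg.2.1, smul_zero]
      · have : ⇑(r • Fg) = fun x => r * Fg x := rfl
        rw [this]
        exact acgstar_smul r Fg.continuous.continuousOn hFg.2.2.1
      · filter_upwards [hFg.2.2.2] with x hx
        exact hx.const_mul r
    exact hasDenjoy_congr_ae h1 (by
      filter_upwards [AEEqFun.coeFn_smul r g] with x hx
      rw [hx]
      rfl)
  rw [Xop_eq hab hsm, Xop_eq hab hFg, AEEqFun.smul_mk]
  rfl

lemma Xop_zero (hab : a < b) : Xop a b (0 : MSpace a b) = 0 := by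
  have h0 : HasDenjoyIntegralFn a b (fun x => (0 : MSpace a b) x) ⇑(0 : C(ℝ, ℝ)) := by
    have h1 : HasDenjoyIntegralFn a b (fun _ => (0:ℝ)) ⇑(0 : C(ℝ, ℝ)) := by
      refine ⟨continuous_const.continuousOn, rfl, ?_, ?_⟩
      · refine ⟨fun _ => Icc a b, fun n => ⟨isClosed_Icc, le_rfl, ?_⟩, (Set.iUnion_const _).symm⟩
        intro ε hε
        refine ⟨1, one_pos, fun D _ _ => ?_⟩
        have : ∀ p ∈ D, osc (⇑(0 : C(ℝ, ℝ))) (Icc p.1 p.2) = 0 := by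
          intro p _
          apply le_antisymm _ (osc_nonneg _ _)
          apply osc_le _ le_rfl
          intro x _ y _
          simp
        rw [Finset.sum_congr rfl this]
        simpa using hε
      · exact Filter.Eventually.of_forall fun x => hasDerivAt_const x 0
    exact hasDenjoy_congr_ae h1 (by
      filter_upwards [AEEqFun.coeFn_zero (β := ℝ) (μ := volume.restrict (Icc a b))] with x hx
      exact hx.symm)
  rw [Xop_eq hab h0]
  apply AEEqFun.mk_eq_mk.2
  exact Filter.Eventually.of_forall fun x => rfl

/-! ### The map `Φ` from continuous functions on `[a,b]` to `MSpace` -/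

/-- Extension of a continuous function on `[a,b]` to `ℝ`. -/
def extFn (hab : a ≤ b) (u : C(Icc a b, ℝ)) : C(ℝ, ℝ) :=
  ⟨fun x => u (Set.projIcc a b hab x), u.continuous.comp (continuous_projIcc)⟩

lemma extFn_eq_on (hab : a ≤ b) (u : C(Icc a b, ℝ)) {x : ℝ} (hx : x ∈ Icc a b) :
    extFn hab u x = u ⟨x, hx⟩ := by
  simp [extFn, Set.projIcc_of_mem hab hx]

/-- The embedding of `C[a,b]` into `MSpace a b`. -/
def Phi (hab : a ≤ b) (u : C(Icc a b, ℝ)) : MSpace a b :=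
  AEEqFun.mk ⇑(extFn hab u) (extFn hab u).continuous.aestronglyMeasurable

lemma Phi_add (hab : a ≤ b) (u v : C(Icc a b, ℝ)) :
    Phi hab (u + v) = Phi hab u + Phi hab v := by
  rw [Phi, Phi, Phi, AEEqFun.mk_add_mk]
  rfl

lemma Phi_smul (hab : a ≤ b) (r : ℝ) (u : C(Icc a b, ℝ)) :
    Phi hab (r • u) = r • Phi hab u := by
  rw [Phi, Phi, AEEqFun.smul_mk]
  rfl

lemma Phi_zero (hab : a ≤ b) : Phi hab 0 = 0 := by
  rw [Phi]
  apply AEEqFun.mk_eq_mk.2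
  exact Filter.Eventually.of_forall fun x => rfl

lemma Phi_injective (hab : a < b) : Function.Injective (Phi hab.le) := by
  intro u v huv
  have hae := AEEqFun.mk_eq_mk.1 huv
  have heq := continuous_eqOn_of_ae hab (extFn hab.le u).continuous
    (extFn hab.le v).continuous hae
  ext t
  have h1 := heq t.2
  rw [extFn_eq_on hab.le u t.2, extFn_eq_on hab.le v t.2] at h1
  simpa using h1

/-! ### The Volterra operator -/

/-- The Volterra operator on `C[a,b]` (underlying continuous map). -/
def VopFun (hab : a ≤ b) (u : C(Icc a b, ℝ)) : C(Icc a b, ℝ) :=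
  ⟨fun t => ∫ s in a..(t:ℝ), extFn hab u s,
    (primitive_continuous (extFn hab u).continuous).comp continuous_subtype_val⟩

/-- The Volterra operator on `C[a,b]`. -/
def Vop (hab : a ≤ b) : C(Icc a b, ℝ) →L[ℝ] C(Icc a b, ℝ) :=
  LinearMap.mkContinuous
    { toFun := VopFun hab
      map_add' := by
        intro u v
        ext t
        show (∫ s in a..(t:ℝ), extFn hab (u + v) s) = _
        have hre : ∀ s, extFn hab (u + v) s = extFn hab u s + extFn hab v s := fun s => rfl
        rw [show (fun s => extFn hab (u + v) s) = fun s => extFn hab u s + extFn hab v s from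
          funext hre]
        rw [intervalIntegral.integral_add ((extFn hab u).continuous.intervalIntegrable _ _)
          ((extFn hab v).continuous.intervalIntegrable _ _)]
        rfl
      map_smul' := by
        intro r u
        ext t
        show (∫ s in a..(t:ℝ), extFn hab (r • u) s) = _
        have hre : ∀ s, extFn hab (r • u) s = r • extFn hab u s := fun s => rfl
        rw [show (fun s => extFn hab (r • u) s) = fun s => r • extFn hab u s from funext hre]
        rw [intervalIntegral.integral_smul]
        rfl }
    (b - a)
    (by
      intro u
      show ‖VopFun hab u‖ ≤ (b - a) * ‖u‖
      apply (ContinuousMap.norm_le _ (by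
        have := sub_nonneg.2 hab
        positivity)).2
      intro t
      show ‖∫ s in a..(t:ℝ), extFn hab u s‖ ≤ (b - a) * ‖u‖
      have hb : ∀ s ∈ Set.uIoc a (t:ℝ), ‖extFn hab u s‖ ≤ ‖u‖ := by
        intro s _
        exact (u.norm_coe_le_norm _)
      calc ‖∫ s in a..(t:ℝ), extFn hab u s‖ ≤ ‖u‖ * |(t:ℝ) - a| :=
            intervalIntegral.norm_integral_le_of_norm_le_const hb
        _ ≤ (b - a) * ‖u‖ := by
            rw [abs_of_nonneg (by linarith [t.2.1])]
            rw [mul_comm]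
            apply mul_le_mul_of_nonneg_right _ (norm_nonneg u)
            linarith [t.2.2])

lemma Vop_apply (hab : a ≤ b) (u : C(Icc a b, ℝ)) (t : Icc a b) :
    Vop hab u t = ∫ s in a..(t:ℝ), extFn hab u s := rfl

lemma Vop_pow_apply_le (hab : a ≤ b) (n : ℕ) (u : C(Icc a b, ℝ)) (t : Icc a b) :
    |((Vop hab ^ n) u) t| ≤ ‖u‖ * ((t:ℝ) - a) ^ n / n.factorial := by
  induction n generalizing t with
  | zero =>
      simp only [pow_zero, ContinuousLinearMap.one_apply, Nat.factorial_zero, Nat.cast_one,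
        div_one, pow_zero, mul_one]
      exact (Real.norm_eq_abs _) ▸ u.norm_coe_le_norm t
  | succ n ih =>
      have hpow : (Vop hab ^ (n + 1)) u = Vop hab ((Vop hab ^ n) u) := by
        rw [pow_succ']
        rfl
      rw [hpow, Vop_apply]
      have hta : a ≤ (t:ℝ) := t.2.1
      have hbound : ∀ s ∈ Set.uIoc a (t:ℝ),
          ‖extFn hab ((Vop hab ^ n) u) s‖ ≤ ‖u‖ * (s - a) ^ n / n.factorial := by
        intro s hs
        rw [Set.uIoc_of_le hta] at hs
        have hsI : s ∈ Icc a b := ⟨le_of_lt hs.1, hs.2.trans t.2.2⟩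
        rw [extFn_eq_on hab _ hsI, Real.norm_eq_abs]
        exact ih ⟨s, hsI⟩
      have hint : IntervalIntegrable (fun s => ‖u‖ * (s - a) ^ n / (n.factorial : ℝ))
          volume a (t:ℝ) := by
        apply Continuous.intervalIntegrable
        continuity
      calc |∫ s in a..(t:ℝ), extFn hab ((Vop hab ^ n) u) s|
          ≤ ∫ s in a..(t:ℝ), ‖extFn hab ((Vop hab ^ n) u) s‖ := by
            rw [← Real.norm_eq_abs]
            exact intervalIntegral.norm_integral_le_integral_norm hta
        _ ≤ ∫ s in a..(t:ℝ), ‖u‖ * (s - a) ^ n / n.factorial := by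
            apply intervalIntegral.integral_mono_on hta
              (((extFn hab ((Vop hab ^ n) u)).continuous.norm).intervalIntegrable _ _) hint
            intro s hs
            have hsI : s ∈ Icc a b := ⟨hs.1, hs.2.trans t.2.2⟩
            rw [extFn_eq_on hab _ hsI, Real.norm_eq_abs]
            exact ih ⟨s, hsI⟩
        _ = ‖u‖ * ((t:ℝ) - a) ^ (n + 1) / (n + 1).factorial := by
            have h1 : (∫ s in a..(t:ℝ), ‖u‖ * (s - a) ^ n / n.factorial) =
                (‖u‖ / n.factorial) * ∫ s in a..(t:ℝ), (s - a) ^ n := by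
              rw [← intervalIntegral.integral_const_mul]
              congr 1
              ext s
              ring
            have h2 : (∫ s in a..(t:ℝ), (s - a) ^ n) = ((t:ℝ) - a) ^ (n + 1) / (n + 1) := by
              have := intervalIntegral.integral_comp_sub_right (fun s => s ^ n) a
                (a := a) (b := (t:ℝ))
              rw [this, sub_self, integral_pow]
              simp
            rw [h1, h2]
            have hf : (n.factorial : ℝ) ≠ 0 := Nat.cast_ne_zero.2 n.factorial_ne_zero
            have hfs : ((n + 1).factorial : ℝ) = (n + 1) * n.factorial := by
              rw [Nat.factorial_succ]
              push_cast
              ring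
            rw [hfs, div_mul_div_comm, mul_comm ((n.factorial : ℝ)) ((n:ℝ) + 1)]

lemma Vop_pow_norm_le (hab : a ≤ b) (n : ℕ) :
    ‖(Vop hab ^ n : C(Icc a b, ℝ) →L[ℝ] C(Icc a b, ℝ))‖ ≤ (b - a) ^ n / n.factorial := by
  apply ContinuousLinearMap.opNorm_le_bound
  · have h1 : (0:ℝ) ≤ b - a := sub_nonneg.2 hab
    positivity
  intro u
  apply (ContinuousMap.norm_le _ (by
    have h1 : (0:ℝ) ≤ b - a := sub_nonneg.2 hab
    positivity)).2
  intro t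
  rw [Real.norm_eq_abs]
  calc |((Vop hab ^ n) u) t| ≤ ‖u‖ * ((t:ℝ) - a) ^ n / n.factorial :=
        Vop_pow_apply_le hab n u t
    _ ≤ (b - a) ^ n / n.factorial * ‖u‖ := by
        have h1 : ((t:ℝ) - a) ^ n ≤ (b - a) ^ n := by
          apply pow_le_pow_left₀ (by linarith [t.2.1]) (by linarith [t.2.2])
        have h3 : (b - a) ^ n / n.factorial * ‖u‖ = ‖u‖ * (b - a) ^ n / n.factorial := by
          ring
        rw [h3]
        gcongr

/-- If some power of `x` has norm `< 1` then `1 - x` is a unit. -/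
lemma isUnit_one_sub_of_pow_norm_lt {R : Type*} [NormedRing R] [CompleteSpace R]
    {x : R} (m : ℕ) (h : ‖x ^ m‖ < 1) : IsUnit (1 - x) := by
  set u := Units.oneSub (x ^ m) h with hu
  have huval : (u : R) = 1 - x ^ m := rfl
  have hgs : (∑ i ∈ Finset.range m, x ^ i) * (1 - x) = 1 - x ^ m := by
    have h1 := geom_sum_mul x m
    have h2 : (∑ i ∈ Finset.range m, x ^ i) * (1 - x) =
        -((∑ i ∈ Finset.range m, x ^ i) * (x - 1)) := by noncomm_ring
    rw [h2, h1]
    noncomm_ring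
  have hgs' : (1 - x) * (∑ i ∈ Finset.range m, x ^ i) = 1 - x ^ m := by
    have h1 := mul_geom_sum x m
    have h2 : (1 - x) * (∑ i ∈ Finset.range m, x ^ i) =
        -((x - 1) * (∑ i ∈ Finset.range m, x ^ i)) := by noncomm_ring
    rw [h2, h1]
    noncomm_ring
  have hcomm : Commute (1 - x) (↑u⁻¹ : R) := by
    have h1 : Commute (1 - x) (u : R) := by
      rw [huval]
      have c1 : Commute x (1 - x ^ m) :=
        (Commute.one_right x).sub_right ((Commute.refl x).pow_right m)
      exact (Commute.one_left (1 - x ^ m)).sub_left c1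
    exact h1.units_inv_right
  refine ⟨⟨1 - x, (∑ i ∈ Finset.range m, x ^ i) * ↑u⁻¹, ?_, ?_⟩, rfl⟩
  · calc (1 - x) * ((∑ i ∈ Finset.range m, x ^ i) * ↑u⁻¹)
        = ((1 - x) * (∑ i ∈ Finset.range m, x ^ i)) * ↑u⁻¹ := by rw [mul_assoc]
      _ = (u : R) * ↑u⁻¹ := by rw [hgs', huval]
      _ = 1 := u.mul_inv
  · calc ((∑ i ∈ Finset.range m, x ^ i) * ↑u⁻¹) * (1 - x)
        = (∑ i ∈ Finset.range m, x ^ i) * (↑u⁻¹ * (1 - x)) := by rw [mul_assoc]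
      _ = (∑ i ∈ Finset.range m, x ^ i) * ((1 - x) * ↑u⁻¹) := by rw [hcomm.symm.eq]
      _ = ((∑ i ∈ Finset.range m, x ^ i) * (1 - x)) * ↑u⁻¹ := by rw [← mul_assoc, mul_assoc]
      _ = (u : R) * ↑u⁻¹ := by rw [hgs, huval]
      _ = 1 := u.mul_inv

end DenAux
namespace DenAux

variable {a b : ℝ}

example (a b : ℝ) : CompleteSpace C(Icc a b, ℝ) := by infer_instance
example (a b : ℝ) : NormedRing (C(Icc a b, ℝ) →L[ℝ] C(Icc a b, ℝ)) := by infer_instance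
example (a b : ℝ) : CompleteSpace (C(Icc a b, ℝ) →L[ℝ] C(Icc a b, ℝ)) := by infer_instance
example (a b : ℝ) : Algebra ℝ (C(Icc a b, ℝ) →L[ℝ] C(Icc a b, ℝ)) := by infer_instance

lemma Phi_hasDenjoy (hab : a < b) (u : C(Icc a b, ℝ)) :
    HasDenjoyIntegralFn a b (fun x => (Phi hab.le u) x)
      (fun x => ∫ t in a..x, extFn hab.le u t) :=
  hasDenjoy_congr_ae (primitive_hasDenjoy hab (extFn hab.le u).continuous)
    (AEEqFun.coeFn_mk _ _).symm

lemma Phi_denjoyIntegrable (hab : a < b) (u : C(Icc a b, ℝ)) :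
    DenjoyIntegrable a b (fun x => (Phi hab.le u) x) :=
  ⟨_, Phi_hasDenjoy hab u⟩

lemma Xop_Phi (hab : a < b) (u : C(Icc a b, ℝ)) :
    Xop a b (Phi hab.le u) = Phi hab.le (Vop hab.le u) := by
  set G : C(ℝ, ℝ) := ⟨fun x => ∫ t in a..x, extFn hab.le u t,
    primitive_continuous (extFn hab.le u).continuous⟩ with hG
  have hGD : HasDenjoyIntegralFn a b (fun x => (Phi hab.le u) x) ⇑G := Phi_hasDenjoy hab u
  rw [Xop_eq hab hGD, Phi]
  apply AEEqFun.mk_eq_mk.2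
  rw [Filter.EventuallyEq, MeasureTheory.ae_restrict_iff' measurableSet_Icc]
  apply Filter.Eventually.of_forall
  intro x hx
  rw [extFn_eq_on hab.le _ hx]
  rfl

lemma Xop_repr (hab : a < b) {g : MSpace a b}
    (hg : DenjoyIntegrable a b (fun x => g x)) :
    ∃ u : C(Icc a b, ℝ), Xop a b g = Phi hab.le u := by
  obtain ⟨F, hF⟩ := exists_contMap_hasDenjoy hab hg
  refine ⟨F.restrict (Icc a b), ?_⟩
  rw [Xop_eq hab hF, Phi]
  apply AEEqFun.mk_eq_mk.2
  rw [Filter.EventuallyEq, MeasureTheory.ae_restrict_iff' measurableSet_Icc]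
  apply Filter.Eventually.of_forall
  intro x hx
  rw [extFn_eq_on hab.le _ hx]
  rfl

lemma Phi_sum (hab : a ≤ b) (s : Finset ℕ) (v : ℕ → C(Icc a b, ℝ)) :
    Phi hab (∑ i ∈ s, v i) = ∑ i ∈ s, Phi hab (v i) := by
  classical
  induction s using Finset.induction with
  | empty => simpa using Phi_zero hab
  | insert x s hx ih =>
      rw [Finset.sum_insert hx, Finset.sum_insert hx, Phi_add, ih]

end DenAux
set_option maxHeartbeats 2000000 in
set_option synthInstance.maxHeartbeats 1000000 in
open DenAux in
theorem polynomial_action_automorphism (a b : ℝ) (hab : a < b)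
    (M : Submodule ℝ (MSpace a b))
    (hXcl : ∀ g ∈ M, Xop a b g ∈ M)
    (hC : ∀ F : C(ℝ, ℝ), AEEqFun.mk ⇑F F.continuous.aestronglyMeasurable ∈ M)
    (hDen : ∀ g ∈ M, DenjoyIntegrable a b fun x => g x)
    (p : Polynomial ℝ) (hp : p.coeff 0 ≠ 0) :
    Set.BijOn (fun g => p.sum fun i c => c • (Xop a b)^[i] g)
      (M : Set (MSpace a b)) (M : Set (MSpace a b)) ∧
    (∀ g ∈ M, ∀ h ∈ M,
      (p.sum fun i c => c • (Xop a b)^[i] (g + h)) =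
        (p.sum fun i c => c • (Xop a b)^[i] g) + (p.sum fun i c => c • (Xop a b)^[i] h)) ∧
    (∀ r : ℝ, ∀ g ∈ M,
      (p.sum fun i c => c • (Xop a b)^[i] (r • g)) =
        r • p.sum fun i c => c • (Xop a b)^[i] g) ∧
    (∀ g ∈ M,
      (p.sum fun i c => c • (Xop a b)^[i] (Xop a b g)) =
        Xop a b (p.sum fun i c => c • (Xop a b)^[i] g)) := by
  classical
  set n := p.natDegree with hn
  set c₀ := p.coeff 0 with hc0
  set T : MSpace a b → MSpace a b := fun g => p.sum fun i c => c • (Xop a b)^[i] g with hT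
  have hTrange : ∀ g, T g = ∑ i ∈ Finset.range (n + 1), p.coeff i • (Xop a b)^[i] g := by
    intro g
    exact p.sum_over_range (fun i => by rw [zero_smul])
  have hXM : ∀ g ∈ M, ∀ i : ℕ, (Xop a b)^[i] g ∈ M := by
    intro g hg i
    induction i with
    | zero => simpa using hg
    | succ i ih => rw [Function.iterate_succ_apply']; exact hXcl _ ih
  have hTmem : ∀ g ∈ M, T g ∈ M := by
    intro g hg
    rw [hTrange]
    exact Submodule.sum_mem M fun i _ => Submodule.smul_mem M _ (hXM g hg i)
  have hXadd : ∀ g ∈ M, ∀ h ∈ M, ∀ i : ℕ, (Xop a b)^[i] (g + h) = (Xop a b)^[i] g + (Xop a b)^[i] h := by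
    intro g hg h hh i
    induction i with
    | zero => rfl
    | succ i ih =>
        rw [Function.iterate_succ_apply', Function.iterate_succ_apply',
          Function.iterate_succ_apply', ih]
        exact Xop_add hab (hDen _ (hXM g hg i)) (hDen _ (hXM h hh i))
  have hXsmul : ∀ (r : ℝ), ∀ g ∈ M, ∀ i : ℕ, (Xop a b)^[i] (r • g) = r • (Xop a b)^[i] g := by
    intro r g hg i
    induction i with
    | zero => rfl
    | succ i ih =>
        rw [Function.iterate_succ_apply', Function.iterate_succ_apply', ih]
        exact Xop_smul hab r (hDen _ (hXM g hg i))
  have hTadd : ∀ g ∈ M, ∀ h ∈ M, T (g + h) = T g + T h := by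
    intro g hg h hh
    rw [hTrange, hTrange, hTrange, ← Finset.sum_add_distrib]
    apply Finset.sum_congr rfl
    intro i _
    rw [hXadd g hg h hh i, smul_add]
  have hTsmul : ∀ (r : ℝ), ∀ g ∈ M, T (r • g) = r • T g := by
    intro r g hg
    rw [hTrange, hTrange, Finset.smul_sum]
    apply Finset.sum_congr rfl
    intro i _
    rw [hXsmul r g hg i, smul_comm]
  have hXsum : ∀ (s : Finset ℕ) (v : ℕ → MSpace a b), (∀ i ∈ s, v i ∈ M) →
      Xop a b (∑ i ∈ s, v i) = ∑ i ∈ s, Xop a b (v i) := by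
    intro s
    induction s using Finset.induction with
    | empty =>
        intro v _
        simpa using Xop_zero hab
    | @insert j s hj ih =>
        intro v hv
        rw [Finset.sum_insert hj, Finset.sum_insert hj,
          Xop_add hab (hDen _ (hv _ (Finset.mem_insert_self _ _)))
            (hDen _ (Submodule.sum_mem M fun i hi => hv i (Finset.mem_insert_of_mem hi))),
          ih v (fun i hi => hv i (Finset.mem_insert_of_mem hi))]
  have hTX : ∀ g ∈ M, T (Xop a b g) = Xop a b (T g) := by
    intro g hg
    rw [hTrange, hTrange]
    rw [hXsum (Finset.range (n+1)) (fun i => p.coeff i • (Xop a b)^[i] g)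
      (fun i _ => Submodule.smul_mem M _ (hXM g hg i))]
    apply Finset.sum_congr rfl
    intro i _
    rw [Xop_smul hab _ (hDen _ (hXM g hg i))]
    congr 1
    rw [← Function.iterate_succ_apply, Function.iterate_succ_apply']
  -- operator setup
  set Vo := Vop (le_of_lt hab) with hVo
  set W : C(Icc a b, ℝ) →L[ℝ] C(Icc a b, ℝ) :=
    ∑ i ∈ Finset.range n, p.coeff (i+1) • Vo ^ i with hW
  have hPhiM : ∀ w : C(Icc a b, ℝ), Phi (le_of_lt hab) w ∈ M := fun w =>
    hC (extFn (le_of_lt hab) w)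
  have hiter : ∀ (i : ℕ) (u : C(Icc a b, ℝ)),
      (Xop a b)^[i] (Phi (le_of_lt hab) u) = Phi (le_of_lt hab) ((Vo ^ i) u) := by
    intro i
    induction i with
    | zero =>
        intro u
        simp
    | succ i ih =>
        intro u
        rw [Function.iterate_succ_apply', ih]
        rw [Xop_Phi hab]
        rw [pow_succ']
        rfl
  have hformula : ∀ g ∈ M, ∀ u, Xop a b g = Phi (le_of_lt hab) u →
      T g = c₀ • g + Phi (le_of_lt hab) (W u) := by
    intro g hg u hu
    rw [hTrange, Finset.sum_range_succ']
    rw [show (Xop a b)^[0] g = g from rfl]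
    have h1 : ∀ i, (Xop a b)^[i+1] g = Phi (le_of_lt hab) ((Vo ^ i) u) := by
      intro i
      rw [Function.iterate_succ_apply, hu, hiter]
    have h2 : (∑ i ∈ Finset.range n, p.coeff (i+1) • (Xop a b)^[i+1] g)
        = Phi (le_of_lt hab) (W u) := by
      have h3 : ∀ i ∈ Finset.range n, p.coeff (i+1) • (Xop a b)^[i+1] g
          = Phi (le_of_lt hab) (p.coeff (i+1) • (Vo ^ i) u) := by
        intro i _
        rw [h1 i, ← Phi_smul]
      rw [Finset.sum_congr rfl h3, ← Phi_sum]
      congr 1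
      rw [hW, ContinuousLinearMap.sum_apply]
      apply Finset.sum_congr rfl
      intro i _
      rw [ContinuousLinearMap.smul_apply]
    rw [h2, add_comm]
  -- invertibility of the operator
  set PA := c₀ • (1 : C(Icc a b, ℝ) →L[ℝ] C(Icc a b, ℝ)) + W * Vo with hPA
  have hPAapp : ∀ u, PA u = c₀ • u + W (Vo u) := by
    intro u
    rw [hPA, ContinuousLinearMap.add_apply, ContinuousLinearMap.smul_apply,
      ContinuousLinearMap.one_apply, ContinuousLinearMap.mul_apply]
  have hPAunit : IsUnit PA := by
    have hsmulmul : ∀ (r : ℝ) (f g : C(Icc a b, ℝ) →L[ℝ] C(Icc a b, ℝ)),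
        (r • f) * g = r • (f * g) := by
      intro r f g
      ext u
      rfl
    have hmulsmul : ∀ (r : ℝ) (f g : C(Icc a b, ℝ) →L[ℝ] C(Icc a b, ℝ)),
        f * (r • g) = r • (f * g) := by
      intro r f g
      ext u
      simp [ContinuousLinearMap.mul_apply]
    have hcommWV : Commute W Vo := by
      show W * Vo = Vo * W
      rw [hW, Finset.sum_mul, Finset.mul_sum]
      apply Finset.sum_congr rfl
      intro i _
      rw [hsmulmul, hmulsmul]
      congr 1
      rw [← pow_succ, ← pow_succ']
    set W2 := (-(c₀)⁻¹) • W with hW2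
    have hcommW2V : Commute W2 Vo := by
      show W2 * Vo = Vo * W2
      rw [hW2, hsmulmul, hmulsmul, hcommWV.eq]
    set x := W2 * Vo with hx
    have hxn : ∀ m : ℕ, 0 < m → ‖x ^ m‖ ≤ (‖W2‖ * (b - a)) ^ m / m.factorial := by
      intro m hm
      rw [hx, hcommW2V.mul_pow]
      calc ‖W2 ^ m * Vo ^ m‖ ≤ ‖W2 ^ m‖ * ‖Vo ^ m‖ := by
            have hnm := norm_mul_le (W2 ^ m) (Vo ^ m)
            exact hnm
        _ ≤ ‖W2‖ ^ m * ((b - a) ^ m / m.factorial) := by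
            have h1 := norm_pow_le' W2 hm
            have h2 := Vop_pow_norm_le (le_of_lt hab) m
            exact mul_le_mul h1 h2 (by positivity) (by positivity)
        _ = (‖W2‖ * (b - a)) ^ m / m.factorial := by
            rw [mul_pow]
            ring
    have htend := FloorSemiring.tendsto_pow_div_factorial_atTop
      (K := ℝ) (‖W2‖ * (b - a))
    have hev : ∀ᶠ m : ℕ in Filter.atTop,
        (‖W2‖ * (b - a)) ^ m / m.factorial < 1 :=
      htend.eventually_lt_const one_pos
    obtain ⟨m, hm1, hm2⟩ := (hev.and (Filter.eventually_ge_atTop 1)).exists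
    have hlt : ‖x ^ m‖ < 1 := lt_of_le_of_lt (hxn m hm2) hm1
    have h1u := isUnit_one_sub_of_pow_norm_lt (x := x) m hlt
    have hPAeq : PA = c₀ • (1 - x) := by
      rw [hPA, hx, hW2]
      ext u t
      simp only [ContinuousLinearMap.add_apply, ContinuousLinearMap.smul_apply,
        ContinuousLinearMap.one_apply, ContinuousLinearMap.sub_apply,
        ContinuousLinearMap.mul_apply, ContinuousMap.add_apply, ContinuousMap.smul_apply,
        ContinuousMap.sub_apply, smul_eq_mul, ContinuousLinearMap.neg_apply,
        ContinuousMap.neg_apply]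
      field_simp
      ring
    have hu0 : IsUnit (c₀ • (1 : C(Icc a b, ℝ) →L[ℝ] C(Icc a b, ℝ))) := by
      refine ⟨⟨c₀ • 1, c₀⁻¹ • 1, ?_, ?_⟩, rfl⟩
      · ext u t
        simp only [ContinuousLinearMap.mul_apply, ContinuousLinearMap.smul_apply,
          ContinuousLinearMap.one_apply, ContinuousMap.smul_apply, smul_eq_mul]
        field_simp
      · ext u t
        simp only [ContinuousLinearMap.mul_apply, ContinuousLinearMap.smul_apply,
          ContinuousLinearMap.one_apply, ContinuousMap.smul_apply, smul_eq_mul]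
        field_simp
    have hfact : c₀ • (1 - x) = (c₀ • (1 : C(Icc a b, ℝ) →L[ℝ] C(Icc a b, ℝ))) * (1 - x) := by
      ext u t
      simp only [ContinuousLinearMap.mul_apply, ContinuousLinearMap.smul_apply,
        ContinuousLinearMap.one_apply, ContinuousLinearMap.sub_apply,
        ContinuousMap.smul_apply, ContinuousMap.sub_apply, smul_eq_mul]
    rw [hPAeq, hfact]
    exact hu0.mul h1u
  obtain ⟨PU, hPU⟩ := hPAunit
  have hPUinv : ∀ u, (↑PU⁻¹ : C(Icc a b, ℝ) →L[ℝ] C(Icc a b, ℝ)) (PA u) = u := by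
    intro u
    have : ((↑PU⁻¹ : C(Icc a b, ℝ) →L[ℝ] C(Icc a b, ℝ)) * PA) u = (1 :
        C(Icc a b, ℝ) →L[ℝ] C(Icc a b, ℝ)) u := by
      rw [← hPU, PU.inv_mul]
    rw [ContinuousLinearMap.mul_apply] at this
    exact this
  have hPAsur : ∀ v, PA ((↑PU⁻¹ : C(Icc a b, ℝ) →L[ℝ] C(Icc a b, ℝ)) v) = v := by
    intro v
    have : (PA * (↑PU⁻¹ : C(Icc a b, ℝ) →L[ℝ] C(Icc a b, ℝ))) v = (1 :
        C(Icc a b, ℝ) →L[ℝ] C(Icc a b, ℝ)) v := by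
      rw [← hPU, PU.mul_inv]
    rw [ContinuousLinearMap.mul_apply] at this
    exact this
  -- injectivity
  have hinj : Set.InjOn T (M : Set (MSpace a b)) := by
    intro g hg g' hg' heq
    set d := g + (-1:ℝ) • g' with hdd
    have hd : d ∈ M := M.add_mem hg (M.smul_mem _ hg')
    have hTd : T d = 0 := by
      rw [hdd, hTadd g hg ((-1:ℝ) • g') (M.smul_mem _ hg'), hTsmul (-1) g' hg', heq,
        neg_one_smul, add_neg_cancel]
    obtain ⟨ud, hud⟩ := Xop_repr hab (hDen d hd)
    have h0 : c₀ • d + Phi (le_of_lt hab) (W ud) = 0 := by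
      rw [← hformula d hd ud hud, hTd]
    set e := (-(c₀)⁻¹) • W ud with he
    have hde : d = Phi (le_of_lt hab) e := by
      rw [he, Phi_smul]
      have hcd : c₀ • d = -(Phi (le_of_lt hab) (W ud)) := eq_neg_of_add_eq_zero_left h0
      calc d = c₀⁻¹ • (c₀ • d) := by rw [smul_smul, inv_mul_cancel₀ hp, one_smul]
        _ = c₀⁻¹ • (-(Phi (le_of_lt hab) (W ud))) := by rw [hcd]
        _ = (-(c₀)⁻¹) • Phi (le_of_lt hab) (W ud) := by rw [smul_neg, ← neg_smul]
    have hudVe : ud = Vo e := by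
      apply Phi_injective hab
      rw [← hud, hde]
      exact Xop_Phi hab e
    have hPAe : Phi (le_of_lt hab) (PA e) = 0 := by
      rw [hPAapp, Phi_add, Phi_smul, ← hde, ← hudVe, h0]
    have he0 : PA e = 0 := by
      apply Phi_injective hab
      rw [hPAe, Phi_zero]
    have hez : e = 0 := by
      have h5 := hPUinv e
      rw [he0, map_zero] at h5
      exact h5.symm
    have hd0 : d = 0 := by rw [hde, hez, Phi_zero]
    have : g - g' = 0 := by
      rw [sub_eq_add_neg, ← neg_one_smul ℝ g', ← hdd, hd0]
    exact sub_eq_zero.1 this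
  -- surjectivity
  have hsur : Set.SurjOn T (M : Set (MSpace a b)) (M : Set (MSpace a b)) := by
    intro k hk
    obtain ⟨uk, huk⟩ := Xop_repr hab (hDen k hk)
    set w := (↑PU⁻¹ : C(Icc a b, ℝ) →L[ℝ] C(Icc a b, ℝ)) ((-(c₀)⁻¹) • W uk) with hw
    set g := c₀⁻¹ • k + Phi (le_of_lt hab) w with hg
    have hgM : g ∈ M := M.add_mem (M.smul_mem _ hk) (hPhiM w)
    refine ⟨g, hgM, ?_⟩
    show T g = k
    have hTg1 : T g = c₀⁻¹ • T k + T (Phi (le_of_lt hab) w) := by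
      rw [hg, hTadd _ (M.smul_mem _ hk) _ (hPhiM w), hTsmul c₀⁻¹ k hk]
    have hTk : T k = c₀ • k + Phi (le_of_lt hab) (W uk) := hformula k hk uk huk
    have hTw : T (Phi (le_of_lt hab) w) = c₀ • Phi (le_of_lt hab) w +
        Phi (le_of_lt hab) (W (Vo w)) :=
      hformula _ (hPhiM w) (Vo w) (Xop_Phi hab w)
    have hPAw : c₀ • w + W (Vo w) = (-(c₀)⁻¹) • W uk := by
      rw [← hPAapp, hw]
      exact hPAsur _
    rw [hTg1, hTk, hTw]
    have h6 : c₀ • Phi (le_of_lt hab) w + Phi (le_of_lt hab) (W (Vo w)) =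
        (-(c₀)⁻¹) • Phi (le_of_lt hab) (W uk) := by
      calc c₀ • Phi (le_of_lt hab) w + Phi (le_of_lt hab) (W (Vo w))
          = Phi (le_of_lt hab) (c₀ • w + W (Vo w)) := by rw [Phi_add, Phi_smul]
        _ = Phi (le_of_lt hab) ((-(c₀)⁻¹) • W uk) := by rw [hPAw]
        _ = (-(c₀)⁻¹) • Phi (le_of_lt hab) (W uk) := Phi_smul _ _ _
    rw [h6, smul_add, smul_smul, inv_mul_cancel₀ hp, one_smul, neg_smul,
      add_assoc, add_neg_cancel, add_zero]
  refine ⟨⟨fun g hg => hTmem g hg, hinj, hsur⟩, hTadd, hTsmul, fun g hg => hTX g hg⟩
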